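/- Fix a nonzero real number λ and integers k ≥ 0, r ≥ 0. In ℝ[[t]]: (1/k!) · (e_λ(t) − 1)^k · e_λ(t)^r = Σ_{n=k}^{∞} {n+r brace k+r}_{r,λ} t^n / n!, i.e., for every n ≥ k, n! times the coefficient of t^n in (e_λ(t)−1)^k e_λ(t)^r / k! equals the degenerate r-Stirling number of the second kind {n+r brace k+r}_{r,λ}, and the coefficients vanish for n < k. -/

import Mathlib

open Finset PowerSeries

noncomputable section

/-- The degenerate falling factorial `(x)_{n,λ} = x(x-λ)⋯(x-(n-1)λ)`. -/
def dff (lam x : ℝ) (n : ℕ) : ℝ := ∏ i ∈ Finset.range n, (x - i * lam)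

/-- The ordinary falling factorial `(x)_n = x(x-1)⋯(x-n+1)`. -/
def ff (x : ℝ) (n : ℕ) : ℝ := ∏ i ∈ Finset.range n, (x - i)

/-- The degenerate exponential `e_λ(t) = ∑_{n=0}^∞ (1)_{n,λ} t^n / n!` in `ℝ[[t]]`. -/
def elam (lam : ℝ) : PowerSeries ℝ :=
  PowerSeries.mk fun n => dff lam 1 n / n.factorial

lemma dff_succ (lam x : ℝ) (n : ℕ) : dff lam x (n+1) = dff lam x n * (x - n * lam) := by
  simp [dff, Finset.prod_range_succ]

lemma dff_add (lam x y : ℝ) (n : ℕ) :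
    dff lam (x + y) n
      = ∑ i ∈ Finset.range (n+1), (n.choose i : ℝ) * dff lam x i * dff lam y (n - i) := by
  induction n with
  | zero => simp [dff]
  | succ n ih =>
    have star : ∑ i ∈ Finset.range (n+2), ((n+1).choose i : ℝ) * dff lam x i * dff lam y (n+1-i)
        = (∑ i ∈ Finset.range (n+1), (n.choose i : ℝ) * dff lam x i * dff lam y (n+1-i))
          + ∑ i ∈ Finset.range (n+1), (n.choose i : ℝ) * dff lam x (i+1) * dff lam y (n-i) := by
      rw [Finset.sum_range_succ' _ (n+1)]
      have h2 : ∑ i ∈ Finset.range (n+1), (n.choose i : ℝ) * dff lam x i * dff lam y (n+1-i)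
          = (∑ i ∈ Finset.range n, ((n.choose (i+1)) : ℝ) * dff lam x (i+1) * dff lam y (n-i))
            + (1 : ℝ) * dff lam x 0 * dff lam y (n+1) := by
        rw [Finset.sum_range_succ' _ n]
        simp
      have h3 : ∑ i ∈ Finset.range (n+1), ((n.choose (i+1)) : ℝ) * dff lam x (i+1) * dff lam y (n-i)
          = ∑ i ∈ Finset.range n, ((n.choose (i+1)) : ℝ) * dff lam x (i+1) * dff lam y (n-i) := by
        rw [Finset.sum_range_succ]
        simp
      have : ∀ i ∈ Finset.range (n+1),
          ((n+1).choose (i+1) : ℝ) * dff lam x (i+1) * dff lam y (n+1-(i+1))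
          = (n.choose (i+1) : ℝ) * dff lam x (i+1) * dff lam y (n-i)
            + (n.choose i : ℝ) * dff lam x (i+1) * dff lam y (n-i) := by
        intro i hi
        rw [Nat.succ_sub_succ]
        push_cast [Nat.choose_succ_succ]
        ring
      rw [Finset.sum_congr rfl this, Finset.sum_add_distrib, h2, ← h3]
      simp
      ring
    rw [dff_succ, ih, Finset.sum_mul, star, ← Finset.sum_add_distrib]
    apply Finset.sum_congr rfl
    intro i hi
    rw [Finset.mem_range] at hi
    have hi' : i ≤ n := Nat.lt_succ_iff.mp hi
    have e1 : n + 1 - i = (n - i) + 1 := by omega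
    rw [e1, dff_succ, dff_succ]
    have : ((n - i : ℕ) : ℝ) = (n : ℝ) - i := by
      push_cast [Nat.cast_sub hi']; ring
    rw [this]
    ring

lemma coeff_elam_pow (lam : ℝ) (m n : ℕ) :
    PowerSeries.coeff n (elam lam ^ m) = dff lam m n / n.factorial := by
  induction m generalizing n with
  | zero =>
    rcases n with _ | n
    · simp [dff]
    · rw [pow_zero, PowerSeries.coeff_one]
      have : dff lam (0:ℝ) (n+1) = 0 := by
        apply Finset.prod_eq_zero (Finset.mem_range.mpr (Nat.succ_pos n))
        simp
      simp [this]
  | succ m ih =>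
    rw [pow_succ, PowerSeries.coeff_mul, Finset.Nat.sum_antidiagonal_eq_sum_range_succ_mk]
    have key : dff lam ((m:ℝ)+1) n
        = ∑ i ∈ Finset.range (n+1), (n.choose i : ℝ) * dff lam m i * dff lam 1 (n - i) :=
      dff_add lam m 1 n
    have cast : ((m+1 : ℕ) : ℝ) = (m:ℝ) + 1 := by push_cast; ring
    rw [cast, key, Finset.sum_div]
    apply Finset.sum_congr rfl
    intro i hi
    rw [Finset.mem_range, Nat.lt_succ_iff] at hi
    rw [ih i]
    show dff lam (↑m) i / ↑i.factorial * ((PowerSeries.coeff (n-i)) (elam lam)) = _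
    rw [elam, PowerSeries.coeff_mk]
    have hcf : (n.choose i : ℝ) * i.factorial * (n-i).factorial = n.factorial := by
      rw_mod_cast [Nat.choose_mul_factorial_mul_factorial hi]
    have h1 : (i.factorial : ℝ) ≠ 0 := Nat.cast_ne_zero.mpr i.factorial_ne_zero
    have h2 : ((n-i).factorial : ℝ) ≠ 0 := Nat.cast_ne_zero.mpr (n-i).factorial_ne_zero
    have h3 : (n.factorial : ℝ) ≠ 0 := Nat.cast_ne_zero.mpr n.factorial_ne_zero
    field_simp
    rw [← hcf]
    ring

lemma choose_alt (k m : ℕ) :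
    ∑ j ∈ Finset.range (k+1), (-1:ℝ)^(k-j) * k.choose j * j.choose m
      = if m = k then 1 else 0 := by
  have h : ((Polynomial.X : Polynomial ℝ)) ^ k = ((Polynomial.X + 1) + (-1)) ^ k := by ring
  have h2 := congrArg (fun p => Polynomial.coeff p m) h
  rw [add_pow, Polynomial.finset_sum_coeff, Polynomial.coeff_X_pow] at h2
  rw [h2]
  apply Finset.sum_congr rfl
  intro j hj
  have hc : ((-1 : Polynomial ℝ))^(k-j) * (k.choose j : Polynomial ℝ)
      = Polynomial.C ((-1:ℝ)^(k-j) * (k.choose j : ℝ)) := by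
    rw [map_mul, map_pow]
    simp
  rw [mul_assoc ((Polynomial.X + 1)^j), hc, Polynomial.coeff_mul_C, Polynomial.coeff_X_add_one_pow]
  ring

lemma ff_nat (j m : ℕ) : ff (j:ℝ) m = (m.factorial : ℝ) * j.choose m := by
  by_cases h : m ≤ j
  · rw [ff]
    have : ∀ i ∈ Finset.range m, ((j:ℝ) - i) = ((j - i : ℕ) : ℝ) := by
      intro i hi
      rw [Finset.mem_range] at hi
      rw [Nat.cast_sub (by omega)]
    rw [Finset.prod_congr rfl this, ← Nat.cast_prod, ← Nat.descFactorial_eq_prod_range,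
      Nat.descFactorial_eq_factorial_mul_choose]
    push_cast; ring
  · push_neg at h
    rw [Nat.choose_eq_zero_of_lt h, ff]
    rw [Finset.prod_eq_zero (Finset.mem_range.mpr (show j < m by omega))]
    · simp
    · simp

lemma ff_alt (k m : ℕ) :
    ∑ j ∈ Finset.range (k+1), (-1:ℝ)^(k-j) * k.choose j * ff (j:ℝ) m
      = if m = k then (k.factorial : ℝ) else 0 := by
  have : ∀ j ∈ Finset.range (k+1), (-1:ℝ)^(k-j) * k.choose j * ff (j:ℝ) m
      = (m.factorial : ℝ) * ((-1:ℝ)^(k-j) * k.choose j * j.choose m) := by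
    intro j hj
    rw [ff_nat]
    ring
  rw [Finset.sum_congr rfl this, ← Finset.mul_sum, choose_alt]
  by_cases h : m = k
  · subst h; simp
  · simp [h]

/-- in `ℝ[[t]]`,
`(1/k!) (e_λ(t) - 1)^k e_λ(t)^r = ∑_{n=k}^∞ {n+r brace k+r}_{r,λ} t^n / n!`,
where `S n k` denotes the degenerate `r`-Stirling number of the second kind
`{n+r brace k+r}_{r,λ}`, characterized by `(x+r)_{n,λ} = ∑_{k=0}^n S n k (x)_k`;
the coefficients of `t^n` for `n < k` vanish. -/
theorem statement_18 (lam : ℝ) (hlam : lam ≠ 0) (k r : ℕ)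
    (S : ℕ → ℕ → ℝ)
    (hS : ∀ (n : ℕ) (x : ℝ), dff lam (x + r) n = ∑ j ∈ Finset.range (n + 1), S n j * ff x j) :
    ((k.factorial : ℝ))⁻¹ • ((elam lam - 1) ^ k * elam lam ^ r) =
      PowerSeries.mk fun n => if k ≤ n then S n k / n.factorial else 0 := by
  ext n
  rw [PowerSeries.coeff_mk, PowerSeries.coeff_smul, smul_eq_mul]
  rw [sub_pow (elam lam) 1 k, Finset.sum_mul, map_sum]
  have hterm : ∀ j ∈ Finset.range (k+1),
      (PowerSeries.coeff n) ((-1)^(j+k) * elam lam ^ j * 1 ^ (k-j)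
        * ((k.choose j : ℕ) : PowerSeries ℝ) * elam lam ^ r)
      = (-1:ℝ)^(k-j) * k.choose j * (dff lam ((j:ℝ)+(r:ℝ)) n / n.factorial) := by
    intro j hj
    rw [Finset.mem_range, Nat.lt_succ_iff] at hj
    have e1 : (-1 : PowerSeries ℝ)^(j+k) * elam lam ^ j * 1^(k-j)
        * ((k.choose j : ℕ) : PowerSeries ℝ) * elam lam ^ r
        = (PowerSeries.C) ((-1:ℝ)^(j+k) * (k.choose j : ℝ)) * elam lam ^ (j+r) := by
      rw [map_mul, map_pow, map_neg, map_one, pow_add]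
      push_cast
      simp only [map_natCast]
      ring
    rw [e1, PowerSeries.coeff_C_mul, coeff_elam_pow]
    have e2 : (-1:ℝ)^(j+k) = (-1:ℝ)^(k-j) := by
      rw [show j + k = (k-j) + 2*j by omega, pow_add, pow_mul]
      simp
    have e3 : (((j+r : ℕ)) : ℝ) = (j:ℝ) + (r:ℝ) := by push_cast; ring
    rw [e2, e3]
  rw [Finset.sum_congr rfl hterm]
  have hsw : ∀ j ∈ Finset.range (k+1),
      (-1:ℝ)^(k-j) * k.choose j * (dff lam ((j:ℝ)+(r:ℝ)) n / n.factorial)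
      = ∑ m ∈ Finset.range (n+1),
          S n m * ((-1:ℝ)^(k-j) * k.choose j * ff (j:ℝ) m) / n.factorial := by
    intro j hj
    rw [hS n (j:ℝ), Finset.sum_div, Finset.mul_sum]
    apply Finset.sum_congr rfl
    intro m hm
    ring
  rw [Finset.sum_congr rfl hsw, Finset.sum_comm]
  have hin : ∀ m ∈ Finset.range (n+1),
      ∑ j ∈ Finset.range (k+1),
        S n m * ((-1:ℝ)^(k-j) * k.choose j * ff (j:ℝ) m) / n.factorial
      = (if m = k then S n m * k.factorial / n.factorial else 0) := by
    intro m hm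
    have : ∑ j ∈ Finset.range (k+1),
        S n m * ((-1:ℝ)^(k-j) * k.choose j * ff (j:ℝ) m) / n.factorial
        = S n m * (∑ j ∈ Finset.range (k+1), (-1:ℝ)^(k-j) * k.choose j * ff (j:ℝ) m)
          / n.factorial := by
      rw [Finset.mul_sum, Finset.sum_div]
    rw [this, ff_alt]
    by_cases h : m = k
    · simp [h]
    · simp [h]
  rw [Finset.sum_congr rfl hin, Finset.sum_ite_eq' (Finset.range (n+1)) k]
  have hk : (k.factorial : ℝ) ≠ 0 := Nat.cast_ne_zero.mpr k.factorial_ne_zero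
  by_cases h : k ≤ n
  · rw [if_pos (Finset.mem_range.mpr (by omega)), if_pos h]
    field_simp
  · rw [if_neg (by simp; omega), if_neg h, mul_zero]
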